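/- Let G be a simple graph whose twin-quotient H is isomorphic to the line graph of some simple graph H′. Then G is a line graph of a multigraph: there exist a vertex type V′, an edge type E′, and an endpoint map ends : E′ → Sym2 V′ with ends e non-diagonal (no loops) for every e, such that G is isomorphic to the simple graph on vertex set E′ in which distinct e and f are adjacent if and only if ends e and ends f share a common vertex. (The multigraph is obtained from H′ by replacing each edge by a number of parallel edges equal to the size of the corresponding twin-equivalence class.) -/

import Mathlib

/-- Two vertices are *true twins* if they are adjacent and have the same
closed neighborhood. -/
def TrueTwins {V : Type*} (G : SimpleGraph V) (u v : V) : Prop :=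
  G.Adj u v ∧ ∀ w, w ≠ u → w ≠ v → (G.Adj w u ↔ G.Adj w v)

/-- The twin equivalence: `u = v` or `u` and `v` are true twins. -/
def twinSetoid {V : Type*} (G : SimpleGraph V) : Setoid V where
  r u v := u = v ∨ TrueTwins G u v
  iseqv := by
    constructor
    · intro u; exact Or.inl rfl
    · rintro u v (rfl | ⟨hadj, hnb⟩)
      · exact Or.inl rfl
      · exact Or.inr ⟨hadj.symm, fun w h1 h2 => (hnb w h2 h1).symm⟩
    · rintro u v w (rfl | huv) (rfl | hvw)
      · exact Or.inl rfl
      · exact Or.inr hvw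
      · exact Or.inr huv
      · by_cases huw : u = w
        · exact Or.inl huw
        · refine Or.inr ⟨(hvw.2 u huv.1.ne huw).mp huv.1, fun x hxu hxw => ?_⟩
          by_cases hxv : x = v
          · subst hxv
            exact iff_of_true huv.1.symm hvw.1
          · exact (huv.2 x hxu hxv).trans (hvw.2 x hxv hxw)

/-- The *twin-quotient* of `G`: vertices are twin-equivalence classes, two distinct
classes being adjacent iff some representatives are adjacent in `G`. -/
def twinQuotient {V : Type*} (G : SimpleGraph V) :
    SimpleGraph (Quotient (twinSetoid G)) where
  Adj C D := C ≠ D ∧ ∃ u v : V,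
    Quotient.mk (twinSetoid G) u = C ∧ Quotient.mk (twinSetoid G) v = D ∧ G.Adj u v
  symm := ⟨by
    rintro C D ⟨hne, u, v, hu, hv, hadj⟩
    exact ⟨hne.symm, v, u, hv, hu, hadj.symm⟩⟩
  loopless := ⟨by rintro C ⟨hne, -⟩; exact hne rfl⟩

/-- The line graph of a multigraph given by an endpoint map `ends : E' → Sym2 V'`:
the vertices are the edges `E'`, two distinct edges being adjacent iff their endpoint
pairs share a common vertex. -/
def multiLineGraph {V' E' : Type*} (ends : E' → Sym2 V') : SimpleGraph E' where
  Adj e f := e ≠ f ∧ ∃ x, x ∈ ends e ∧ x ∈ ends f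
  symm := ⟨by rintro e f ⟨hne, x, hxe, hxf⟩; exact ⟨hne.symm, x, hxf, hxe⟩⟩
  loopless := ⟨by rintro e ⟨hne, -⟩; exact hne rfl⟩

lemma sym2_exists_mem {α : Type*} (s : Sym2 α) : ∃ x, x ∈ s := by
  induction s using Sym2.ind with
  | _ a b => exact ⟨a, Sym2.mem_mk_left a b⟩

lemma sym2_isDiag_map_iff {α β : Type*} {f : α → β} (hf : Function.Injective f) (s : Sym2 α) :
    (s.map f).IsDiag ↔ s.IsDiag := by
  induction s using Sym2.ind with
  | _ a b => simp [hf.eq_iff]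

/-- Adjacency transfers along the twin relation. -/
lemma adj_of_twin_rel {V : Type*} {G : SimpleGraph V} {u u' v : V}
    (h : (twinSetoid G).r u' u)
    (hv : Quotient.mk (twinSetoid G) v ≠ Quotient.mk (twinSetoid G) u)
    (hadj : G.Adj u' v) : G.Adj u v := by
  rcases h with rfl | ⟨hAdj, hnb⟩
  · exact hadj
  · have hvu : v ≠ u := fun he => hv (by rw [he])
    have hvu' : v ≠ u' := by
      rintro rfl
      exact hv (Quotient.sound (Or.inr ⟨hAdj, hnb⟩))
    exact ((hnb v hvu' hvu).mp hadj.symm).symm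

/-- If the twin-quotient of `G` is isomorphic to the line graph of some simple graph,
then `G` is a line graph of a multigraph: there are a vertex type `V'`, an edge type
`E'` and a loopless endpoint map `ends : E' → Sym2 V'` such that `G` is isomorphic to
the graph on `E'` in which distinct edges are adjacent iff their endpoints meet. -/
theorem isLineGraphOfMultigraph_of_twinQuotient_lineGraph {V : Type u} {W : Type v}
    (G : SimpleGraph V) (H' : SimpleGraph W)
    (h : Nonempty (twinQuotient G ≃g H'.lineGraph)) :
    ∃ (V' E' : Type (max u v)) (ends : E' → Sym2 V'),
      (∀ e, ¬ (ends e).IsDiag) ∧ Nonempty (G ≃g multiLineGraph ends) := by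
  obtain ⟨φ⟩ := h
  set ends : ULift.{v} V → Sym2 (ULift.{u} W) :=
    fun e => ((φ (Quotient.mk (twinSetoid G) e.down) : Sym2 W)).map ULift.up with hends
  refine ⟨ULift.{u} W, ULift.{v} V, ends, ?_, ?_⟩
  · intro e
    rw [hends, sym2_isDiag_map_iff ULift.up_injective]
    exact H'.not_isDiag_of_mem_edgeSet (φ _).property
  · have key : ∀ u v : V, (multiLineGraph ends).Adj ⟨u⟩ ⟨v⟩ ↔ G.Adj u v := by
      intro u v
      constructor
      · rintro ⟨hne, x, hxu, hxv⟩
        have huv : u ≠ v := fun he => hne (by rw [he])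
        by_cases hq : Quotient.mk (twinSetoid G) u = Quotient.mk (twinSetoid G) v
        · rcases Quotient.exact hq with rfl | ht
          · exact absurd rfl huv
          · exact ht.1
        · -- shared vertex downstairs
          obtain ⟨y, hyu, hy⟩ := Sym2.mem_map.mp hxu
          obtain ⟨y', hyv, hy'⟩ := Sym2.mem_map.mp hxv
          have hyy : y = y' := ULift.up_injective (hy.trans hy'.symm)
          subst hyy
          have hline : H'.lineGraph.Adj (φ (Quotient.mk (twinSetoid G) u))
              (φ (Quotient.mk (twinSetoid G) v)) :=
            ⟨fun he => hq (φ.injective (Subtype.ext (Subtype.ext_iff.mp he))), ⟨y, hyu, hyv⟩⟩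
          have htq := φ.map_rel_iff.mp hline
          obtain ⟨-, u', v', hu', hv', hadj⟩ := htq
          have h1 : G.Adj u v' := by
            refine adj_of_twin_rel (Quotient.exact hu') ?_ hadj
            rw [hv']; exact fun he => hq (by rw [he])
          have h2 : G.Adj v u := by
            refine adj_of_twin_rel (Quotient.exact hv') ?_ h1.symm
            exact hq
          exact h2.symm
      · intro hadj
        have huv : u ≠ v := hadj.ne
        refine ⟨fun he => huv (ULift.up_injective he), ?_⟩
        by_cases hq : Quotient.mk (twinSetoid G) u = Quotient.mk (twinSetoid G) v
        · obtain ⟨x, hx⟩ := sym2_exists_mem (ends ⟨u⟩)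
          refine ⟨x, hx, ?_⟩
          simpa [hends, hq] using hx
        · have htq : (twinQuotient G).Adj (Quotient.mk (twinSetoid G) u)
              (Quotient.mk (twinSetoid G) v) := ⟨hq, u, v, rfl, rfl, hadj⟩
          obtain ⟨-, y, hyu, hyv⟩ := φ.map_rel_iff.mpr htq
          exact ⟨ULift.up y, Sym2.mem_map.mpr ⟨y, hyu, rfl⟩, Sym2.mem_map.mpr ⟨y, hyv, rfl⟩⟩
    exact ⟨⟨Equiv.ulift.symm, fun {a b} => key a b⟩⟩
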